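/- In the setting of the explicit Gramian: if β₀ ≠ 0, α₀ = 0, η_ℓ ≠ 0 for all ℓ, T > 0, then W_T is invertible with inverse W_T⁻¹ z = (1/(Tβ₀²)) z − (1/(Tβ₀²)) Σ_ℓ ((η_ℓ² ∫₀^T e^{2λ_ℓ t} dt − Tβ₀²)/(η_ℓ² ∫₀^T e^{2λ_ℓ t} dt)) ⟨z, f_ℓ⟩ f_ℓ, i.e., this formula defines a bounded operator M with M W_T = W_T M = I. -/

import Mathlib

open MeasureTheory intervalIntegral

section Aux

variable {E : Type*} [NormedAddCommGroup E] [InnerProductSpace ℝ E] [CompleteSpace E]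

lemma aux_summable {f : ℕ → E} (hortho : Orthonormal ℝ f) (g : ℕ → ℝ) (C : ℝ)
    (hg : ∀ ℓ, |g ℓ| ≤ C) (z : E) :
    Summable (fun ℓ => (g ℓ * (inner ℝ z (f ℓ) : ℝ)) • f ℓ) := by
  have h1 : Summable (fun ℓ => ‖g ℓ * (inner ℝ z (f ℓ) : ℝ)‖ ^ 2) := by
    refine Summable.of_nonneg_of_le (fun ℓ => by positivity) (fun ℓ => ?_)
      ((hortho.inner_products_summable z).mul_left (C ^ 2))
    rw [norm_mul, mul_pow, real_inner_comm z (f ℓ)]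
    have hgC : ‖g ℓ‖ ^ 2 ≤ C ^ 2 := by
      rw [Real.norm_eq_abs]
      exact pow_le_pow_left₀ (abs_nonneg _) (hg ℓ) 2
    exact mul_le_mul_of_nonneg_right hgC (by positivity)
  have h2 := (hortho.orthogonalFamily.summable_iff_norm_sq_summable
      (fun ℓ => g ℓ * (inner ℝ z (f ℓ) : ℝ))).2 h1
  simpa [LinearIsometry.toSpanSingleton_apply] using h2

lemma aux_inner {f : ℕ → E} (hortho : Orthonormal ℝ f) (g : ℕ → ℝ)
    (hs : Summable fun ℓ => g ℓ • f ℓ) (j : ℕ) :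
    (inner ℝ (∑' ℓ, g ℓ • f ℓ) (f j) : ℝ) = g j := by
  rw [real_inner_comm, ← innerSL_apply_apply (𝕜 := ℝ), ContinuousLinearMap.map_tsum _ hs]
  rw [tsum_eq_single j]
  · simp [real_inner_self_eq_norm_sq, hortho.1 j]
  · intro ℓ hℓ
    simp [real_inner_smul_right, hortho.2 hℓ.symm]

end Aux

/-- inverse of the controllability Gramian in the case `α₀ = 0`. -/
theorem gramian_inverse_explicit_form
    (μ : Measure ℝ) (hμ : μ = (volume : Measure ℝ).restrict (Set.Icc 0 1))
    (A : Lp ℝ 2 μ →L[ℝ] Lp ℝ 2 μ)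
    (hcompact : IsCompactOperator A) (hselfadj : IsSelfAdjoint A)
    (f : ℕ → Lp ℝ 2 μ) (hortho : Orthonormal ℝ f)
    (lam : ℕ → ℝ) (hlam : ∀ ℓ, lam ℓ ≠ 0)
    (heig : ∀ ℓ, A (f ℓ) = lam ℓ • f ℓ)
    (d : ℕ) (beta : ℕ → ℝ) (hbeta0 : beta 0 ≠ 0)
    (eta : ℕ → ℝ) (heta : ∀ ℓ, eta ℓ = ∑ k ∈ Finset.range (d + 1), beta k * lam ℓ ^ k)
    (hetane : ∀ ℓ, eta ℓ ≠ 0)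
    (T : ℝ) (hT : 0 < T)
    (Lam : ℝ) (hlamBdd : ∀ ℓ, |lam ℓ| ≤ Lam)
    (c : ℝ) (hc : 0 < c)
    (hlow : ∀ ℓ, c ≤ eta ℓ ^ 2 * ∫ t in (0:ℝ)..T, Real.exp (2 * lam ℓ * t))
    (W M : Lp ℝ 2 μ →L[ℝ] Lp ℝ 2 μ)
    (hW : ∀ z : Lp ℝ 2 μ,
      W z = (T * beta 0 ^ 2) • z
        + ∑' ℓ : ℕ,
            ((eta ℓ ^ 2 * ∫ t in (0:ℝ)..T, Real.exp (2 * lam ℓ * t))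
              - T * beta 0 ^ 2) • ((inner ℝ z (f ℓ) : ℝ) • f ℓ))
    (hM : ∀ z : Lp ℝ 2 μ,
      M z = (1 / (T * beta 0 ^ 2)) • z
        - (1 / (T * beta 0 ^ 2)) • ∑' ℓ : ℕ,
            (((eta ℓ ^ 2 * ∫ t in (0:ℝ)..T, Real.exp (2 * lam ℓ * t))
                - T * beta 0 ^ 2)
              / (eta ℓ ^ 2 * ∫ t in (0:ℝ)..T, Real.exp (2 * lam ℓ * t)))
            • ((inner ℝ z (f ℓ) : ℝ) • f ℓ)) :
    M * W = 1 ∧ W * M = 1 := by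
  -- abbreviations
  set a : ℕ → ℝ := fun ℓ => eta ℓ ^ 2 * ∫ t in (0:ℝ)..T, Real.exp (2 * lam ℓ * t) with ha_def
  set b : ℝ := T * beta 0 ^ 2 with hb_def
  have hb : 0 < b := by positivity
  have hbne : b ≠ 0 := ne_of_gt hb
  have hac : ∀ ℓ, c ≤ a ℓ := hlow
  have hane : ∀ ℓ, a ℓ ≠ 0 := fun ℓ => ne_of_gt (lt_of_lt_of_le hc (hac ℓ))
  have hLam : 0 ≤ Lam := (abs_nonneg _).trans (hlamBdd 0)
  -- upper bound on the integrals
  have hI : ∀ ℓ, (∫ t in (0:ℝ)..T, Real.exp (2 * lam ℓ * t)) ≤ T * Real.exp (2 * Lam * T) := by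
    intro ℓ
    have hb1 : ∀ t ∈ Set.uIoc (0:ℝ) T, ‖Real.exp (2 * lam ℓ * t)‖ ≤ Real.exp (2 * Lam * T) := by
      intro t ht
      rw [Set.uIoc_of_le hT.le] at ht
      rw [Real.norm_eq_abs, Real.abs_exp]
      apply Real.exp_le_exp.2
      have h1 : lam ℓ * t ≤ Lam * T := by
        have h2 : lam ℓ * t ≤ |lam ℓ| * t := by
          have := le_abs_self (lam ℓ); nlinarith [ht.1.le]
        have h3 : |lam ℓ| * t ≤ Lam * T := by
          have := hlamBdd ℓ
          nlinarith [ht.1.le, ht.2, abs_nonneg (lam ℓ)]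
        linarith
      linarith
    have := intervalIntegral.norm_integral_le_of_norm_le_const hb1
    rw [Real.norm_eq_abs] at this
    calc (∫ t in (0:ℝ)..T, Real.exp (2 * lam ℓ * t))
        ≤ |∫ t in (0:ℝ)..T, Real.exp (2 * lam ℓ * t)| := le_abs_self _
      _ ≤ Real.exp (2 * Lam * T) * |T - 0| := this
      _ = T * Real.exp (2 * Lam * T) := by rw [sub_zero, abs_of_pos hT]; ring
  -- bound on eta
  set B : ℝ := ∑ k ∈ Finset.range (d + 1), |beta k| * Lam ^ k with hB_def
  have hetaB : ∀ ℓ, |eta ℓ| ≤ B := by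
    intro ℓ
    rw [heta ℓ]
    calc |∑ k ∈ Finset.range (d + 1), beta k * lam ℓ ^ k|
        ≤ ∑ k ∈ Finset.range (d + 1), |beta k * lam ℓ ^ k| := Finset.abs_sum_le_sum_abs _ _
      _ ≤ B := by
          apply Finset.sum_le_sum
          intro k _
          rw [abs_mul, abs_pow]
          exact mul_le_mul_of_nonneg_left
            (pow_le_pow_left₀ (abs_nonneg _) (hlamBdd ℓ) k) (abs_nonneg _)
  -- integral nonneg
  have he2 : ∀ ℓ, 0 < eta ℓ ^ 2 := fun ℓ =>
    lt_of_le_of_ne (sq_nonneg _) (Ne.symm (pow_ne_zero 2 (hetane ℓ)))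
  have hInn : ∀ ℓ, 0 ≤ (∫ t in (0:ℝ)..T, Real.exp (2 * lam ℓ * t)) := by
    intro ℓ
    by_contra h
    push_neg at h
    have h2 : eta ℓ ^ 2 * (∫ t in (0:ℝ)..T, Real.exp (2 * lam ℓ * t)) < 0 :=
      mul_neg_of_pos_of_neg (he2 ℓ) h
    linarith [hlow ℓ]
  -- upper bound on a
  set K : ℝ := B ^ 2 * (T * Real.exp (2 * Lam * T)) with hK_def
  have haK : ∀ ℓ, a ℓ ≤ K := by
    intro ℓ
    have h1 : eta ℓ ^ 2 ≤ B ^ 2 := by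
      rw [← sq_abs (eta ℓ)]
      exact pow_le_pow_left₀ (abs_nonneg _) (hetaB ℓ) 2
    exact mul_le_mul h1 (hI ℓ) (hInn ℓ) (by positivity)
  -- bounds for coefficients
  have hcoef1 : ∀ ℓ, |a ℓ - b| ≤ K + b := by
    intro ℓ
    have h1 : 0 ≤ a ℓ := le_trans hc.le (hac ℓ)
    rw [abs_le]
    constructor <;> nlinarith [haK ℓ]
  have hcoef2 : ∀ ℓ, |(a ℓ - b) / a ℓ| ≤ (K + b) / c := by
    intro ℓ
    rw [abs_div, abs_of_pos (lt_of_lt_of_le hc (hac ℓ))]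
    exact div_le_div₀ (by positivity) (hcoef1 ℓ) hc (hac ℓ)
  -- rewrite hW, hM with merged scalars
  have hW' : ∀ z, W z = b • z + ∑' ℓ, ((a ℓ - b) * (inner ℝ z (f ℓ) : ℝ)) • f ℓ := by
    intro z; rw [hW z]; simp only [smul_smul]; rfl
  have hM' : ∀ z, M z = (1 / b) • z
      - (1 / b) • ∑' ℓ, ((a ℓ - b) / a ℓ * (inner ℝ z (f ℓ) : ℝ)) • f ℓ := by
    intro z; rw [hM z]; simp only [smul_smul]; rfl
  -- summability
  have hs1 : ∀ z, Summable (fun ℓ => ((a ℓ - b) * (inner ℝ z (f ℓ) : ℝ)) • f ℓ) :=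
    fun z => aux_summable hortho _ (K + b) hcoef1 z
  have hs2 : ∀ z, Summable (fun ℓ => ((a ℓ - b) / a ℓ * (inner ℝ z (f ℓ) : ℝ)) • f ℓ) :=
    fun z => aux_summable hortho _ ((K + b) / c) hcoef2 z
  -- inner products with f j
  have hWinner : ∀ z j, (inner ℝ (W z) (f j) : ℝ) = a j * (inner ℝ z (f j) : ℝ) := by
    intro z j
    rw [hW' z, inner_add_left, real_inner_smul_left,
      aux_inner hortho _ (hs1 z) j]
    ring
  have hMinner : ∀ z j, (inner ℝ (M z) (f j) : ℝ) = (inner ℝ z (f j) : ℝ) / a j := by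
    intro z j
    rw [hM' z, inner_sub_left, real_inner_smul_left, real_inner_smul_left,
      aux_inner hortho _ (hs2 z) j]
    field_simp [hane j]
    ring
  constructor
  · apply ContinuousLinearMap.ext
    intro z
    rw [ContinuousLinearMap.mul_apply, ContinuousLinearMap.one_apply]
    rw [hM' (W z)]
    have key : (∑' ℓ, ((a ℓ - b) / a ℓ * (inner ℝ (W z) (f ℓ) : ℝ)) • f ℓ)
        = ∑' ℓ, ((a ℓ - b) * (inner ℝ z (f ℓ) : ℝ)) • f ℓ := by
      apply tsum_congr
      intro ℓ
      rw [hWinner z ℓ]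
      congr 1
      field_simp [hane ℓ]
    rw [key]
    have hSval : (∑' ℓ, ((a ℓ - b) * (inner ℝ z (f ℓ) : ℝ)) • f ℓ) = W z - b • z := by
      rw [hW' z]; abel
    rw [hSval, smul_sub, sub_sub_cancel, smul_smul, one_div, inv_mul_cancel₀ hbne, one_smul]
  · apply ContinuousLinearMap.ext
    intro z
    rw [ContinuousLinearMap.mul_apply, ContinuousLinearMap.one_apply]
    rw [hW' (M z)]
    have key : (∑' ℓ, ((a ℓ - b) * (inner ℝ (M z) (f ℓ) : ℝ)) • f ℓ)
        = ∑' ℓ, ((a ℓ - b) / a ℓ * (inner ℝ z (f ℓ) : ℝ)) • f ℓ := by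
      apply tsum_congr
      intro ℓ
      rw [hMinner z ℓ]
      congr 1
      field_simp [hane ℓ]
    rw [key]
    have hb2 : b • M z = z - ∑' ℓ, ((a ℓ - b) / a ℓ * (inner ℝ z (f ℓ) : ℝ)) • f ℓ := by
      rw [hM' z, smul_sub, smul_smul, smul_smul, mul_one_div, div_self hbne, one_smul, one_smul]
    rw [hb2, sub_add_cancel]
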